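/- Let f and g be polynomials with integer coefficients such that the content of g divides the content of f, and suppose that g(n) divides f(n) for infinitely many integers n. Then g divides f in ℤ[x]. -/

import Mathlib

open Polynomial Filter

lemma aux_finite_nonpos (W : Polynomial ℤ) (hW : W ≠ 0)
    (hlead : 0 < W.leadingCoeff) (heven : Even W.natDegree) (hdeg : 0 < W.natDegree) :
    {n : ℤ | W.eval n ≤ 0}.Finite := by
  have hinj : Function.Injective ⇑(Int.castRingHom ℝ) := Int.cast_injective
  set Wr : Polynomial ℝ := W.map (Int.castRingHom ℝ) with hWr
  have hWrne : Wr ≠ 0 := by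
    rw [hWr, Ne, Polynomial.map_eq_zero_iff hinj]; exact hW
  have hdegeq : Wr.natDegree = W.natDegree := natDegree_map_eq_of_injective hinj W
  have hleadr : Wr.leadingCoeff = (W.leadingCoeff : ℝ) := by
    rw [hWr, leadingCoeff, natDegree_map_eq_of_injective hinj, coeff_map]; rfl
  have hldpos : (0:ℝ) < Wr.leadingCoeff := by rw [hleadr]; exact_mod_cast hlead
  have hdegr : 0 < Wr.degree := by
    rw [degree_eq_natDegree hWrne]; exact_mod_cast hdegeq ▸ hdeg
  have htop : Tendsto (fun x : ℝ => Wr.eval x) atTop atTop :=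
    Polynomial.tendsto_atTop_of_leadingCoeff_nonneg Wr hdegr hldpos.le
  have hbot : Tendsto (fun x : ℝ => Wr.eval x) atBot atTop := by
    have hne : Wr.comp (-X) ≠ 0 := by
      intro h0
      have h1 := natDegree_comp (p := Wr) (q := (-X : Polynomial ℝ))
      rw [h0] at h1
      simp only [natDegree_zero, natDegree_neg, natDegree_X, mul_one] at h1
      rw [hdegeq] at h1; omega
    have hcomp : Tendsto (fun x : ℝ => (Wr.comp (-X)).eval x) atTop atTop := by
      apply Polynomial.tendsto_atTop_of_leadingCoeff_nonneg
      · rw [degree_eq_natDegree hne, natDegree_comp]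
        simp only [natDegree_neg, natDegree_X, mul_one]
        exact_mod_cast hdegeq ▸ hdeg
      · rw [leadingCoeff_comp (by simp)]
        simp only [leadingCoeff_neg, leadingCoeff_X]
        rcases heven with ⟨k, hk⟩
        rw [hdegeq, hk]
        have : (-1 : ℝ) ^ (k + k) = 1 := by
          rw [← two_mul, pow_mul]; norm_num
        rw [this, mul_one]
        exact hldpos.le
    have h2 : Tendsto (fun x : ℝ => Wr.eval (-x)) atTop atTop := by
      simpa [eval_comp] using hcomp
    have hneg : Tendsto (fun x : ℝ => -x) atBot atTop := tendsto_neg_atBot_atTop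
    have := h2.comp hneg
    simpa [Function.comp_def, neg_neg] using this
  have hcast : ∀ n : ℤ, Wr.eval (n : ℝ) = ((W.eval n : ℤ) : ℝ) := fun n =>
    eval_intCast_map (Int.castRingHom ℝ) W n
  have h1 : ∀ᶠ n : ℤ in atTop, 0 < W.eval n := by
    have := htop.comp (tendsto_intCast_atTop_atTop (R := ℝ))
    filter_upwards [this.eventually_gt_atTop 0] with n hn
    rw [Function.comp, hcast n] at hn
    exact_mod_cast hn
  have h2 : ∀ᶠ n : ℤ in atBot, 0 < W.eval n := by
    have hcastbot : Tendsto (fun n : ℤ => (n : ℝ)) atBot atBot :=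
      tendsto_intCast_atBot_iff.mpr tendsto_id
    have := hbot.comp hcastbot
    filter_upwards [this.eventually_gt_atTop 0] with n hn
    rw [Function.comp, hcast n] at hn
    exact_mod_cast hn
  have hpos : ∀ᶠ n : ℤ in cofinite, 0 < W.eval n := by
    rw [Int.cofinite_eq, eventually_sup]
    exact ⟨h2, h1⟩
  rw [eventually_cofinite] at hpos
  simpa [not_lt] using hpos


theorem content_dvd_and_infinite_dvd_values_imp_dvd
    (f g : Polynomial ℤ)
    (hc : g.content ∣ f.content)
    (h : {n : ℤ | g.eval n ∣ f.eval n}.Infinite) :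
    g ∣ f := by
  classical
  rcases eq_or_ne g 0 with rfl | hg
  · have hf0 : f = 0 := by
      apply Polynomial.eq_zero_of_infinite_isRoot
      apply h.mono
      intro n hn
      simpa [IsRoot] using hn
    simp [hf0]
  rcases eq_or_ne f 0 with rfl | hf
  · exact dvd_zero g
  have hinj : Function.Injective ⇑(Int.castRingHom ℚ) := Int.cast_injective
  set ι := Int.castRingHom ℚ with hι
  set fq := f.map ι with hfq
  set gq := g.map ι with hgq
  have hgq0 : gq ≠ 0 := by rw [hgq, Ne, Polynomial.map_eq_zero_iff hinj]; exact hg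
  set q0 : Polynomial ℚ := fq / gq with hq0
  set r0 : Polynomial ℚ := fq % gq with hr0def
  have hdm : gq * q0 + r0 = fq := EuclideanDomain.div_add_mod fq gq
  have hr0 : r0.degree < gq.degree := EuclideanDomain.mod_lt _ hgq0
  obtain ⟨b1, hb1⟩ := IsLocalization.integerNormalization_map_to_map (nonZeroDivisors ℤ) q0
  obtain ⟨b2, hb2⟩ := IsLocalization.integerNormalization_map_to_map (nonZeroDivisors ℤ) r0
  set Q1 : Polynomial ℤ := IsLocalization.integerNormalization (nonZeroDivisors ℤ) q0 with hQ1
  set R1 : Polynomial ℤ := IsLocalization.integerNormalization (nonZeroDivisors ℤ) r0 with hR1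
  have hb1ne : (b1 : ℤ) ≠ 0 := nonZeroDivisors.coe_ne_zero b1
  have hb2ne : (b2 : ℤ) ≠ 0 := nonZeroDivisors.coe_ne_zero b2
  set d : ℤ := (b1 : ℤ) * (b2 : ℤ) with hd
  have hdne : d ≠ 0 := mul_ne_zero hb1ne hb2ne
  set Q : Polynomial ℤ := C (b2 : ℤ) * Q1 with hQdef
  set R : Polynomial ℤ := C (b1 : ℤ) * R1 with hRdef
  have hb1' : Q1.map ι = C ((b1 : ℤ) : ℚ) * q0 := by
    rw [hι, ← algebraMap_int_eq, hb1, zsmul_eq_mul, ← Polynomial.C_eq_intCast]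
  have hb2' : R1.map ι = C ((b2 : ℤ) : ℚ) * r0 := by
    rw [hι, ← algebraMap_int_eq, hb2, zsmul_eq_mul, ← Polynomial.C_eq_intCast]
  have key : C d * f = g * Q + R := by
    apply Polynomial.map_injective ι hinj
    rw [hQdef, hRdef]
    simp only [Polynomial.map_add, Polynomial.map_mul, Polynomial.map_C, hb1', hb2',
      ← hfq, ← hgq, eq_intCast]
    rw [← hdm]
    push_cast [hd]
    simp only [Polynomial.map_mul, Polynomial.map_intCast]
    simp only [Polynomial.C_eq_intCast]
    ring
  have hmapR : R.map ι = C ((d : ℤ) : ℚ) * r0 := by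
    rw [hRdef, Polynomial.map_mul, Polynomial.map_C, hb2']
    have : ι (b1 : ℤ) = ((b1 : ℤ) : ℚ) := rfl
    rw [this, ← mul_assoc, ← C_mul]
    congr 2
    push_cast [hd]; ring
  have hdegR : R.degree < g.degree := by
    have h1 : R.degree = (R.map ι).degree := (degree_map_eq_of_injective hinj R).symm
    have h2 : (R.map ι).degree ≤ r0.degree := by
      rw [hmapR, ← smul_eq_C_mul]; exact degree_smul_le _ _
    have h3 : gq.degree = g.degree := degree_map_eq_of_injective hinj g
    calc R.degree ≤ r0.degree := h1 ▸ h2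
      _ < gq.degree := hr0
      _ = g.degree := h3
  have heval : ∀ n : ℤ, g.eval n ∣ f.eval n → g.eval n ∣ R.eval n := by
    intro n hn
    have := congrArg (Polynomial.eval n) key
    simp only [eval_mul, eval_add, eval_C] at this
    have : R.eval n = d * f.eval n - g.eval n * Q.eval n := by linarith
    rw [this]
    exact dvd_sub (Dvd.dvd.mul_left hn d) (Dvd.dvd.mul_right dvd_rfl _)
  have hR0 : R = 0 := by
    by_contra hR
    have hnatlt : R.natDegree < g.natDegree := natDegree_lt_natDegree hR hdegR
    set W : Polynomial ℤ := g * g - R * R with hW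
    have hltdeg : (R * R).degree < (g * g).degree := by
      rw [degree_eq_natDegree (mul_ne_zero hR hR), degree_eq_natDegree (mul_ne_zero hg hg),
        natDegree_mul hR hR, natDegree_mul hg hg]
      exact_mod_cast by omega
    have hWdeg : W.degree = (g * g).degree := degree_sub_eq_left_of_degree_lt hltdeg
    have hWne : W ≠ 0 := by
      intro h0
      rw [h0, degree_zero] at hWdeg
      exact mul_ne_zero hg hg (degree_eq_bot.mp hWdeg.symm)
    have hWlead : W.leadingCoeff = g.leadingCoeff * g.leadingCoeff := by
      rw [hW, leadingCoeff_sub_of_degree_lt hltdeg, leadingCoeff_mul]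
    have hWleadpos : 0 < W.leadingCoeff := by
      rw [hWlead]; exact mul_self_pos.mpr (leadingCoeff_ne_zero.mpr hg)
    have hWnat : W.natDegree = g.natDegree + g.natDegree := by
      have := hWdeg
      rw [degree_eq_natDegree hWne, degree_eq_natDegree (mul_ne_zero hg hg),
        natDegree_mul hg hg] at this
      exact_mod_cast this
    have hfin := aux_finite_nonpos W hWne hWleadpos ⟨g.natDegree, hWnat⟩
      (by rw [hWnat]; omega)
    have hRroots : {n : ℤ | R.eval n = 0}.Finite := by
      exact Polynomial.finite_setOf_isRoot hR
    have hinf : ({n : ℤ | g.eval n ∣ f.eval n} \ {n : ℤ | R.eval n = 0}).Infinite :=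
      h.diff hRroots
    apply hinf (hfin.subset ?_)
    intro n hn
    obtain ⟨hn1, hn2⟩ := hn
    have hdvd := heval n hn1
    have habs : (g.eval n).natAbs ≤ (R.eval n).natAbs :=
      Int.natAbs_le_of_dvd_ne_zero hdvd hn2
    have : g.eval n * g.eval n ≤ R.eval n * R.eval n := by
      rw [← Int.natAbs_mul_self (a := g.eval n), ← Int.natAbs_mul_self (a := R.eval n)]
      exact_mod_cast Nat.mul_le_mul habs habs
    simp only [Set.mem_setOf_eq, hW, eval_sub, eval_mul]
    omega
  -- now C d * f = g * Q, deduce gq ∣ fq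
  rw [hR0, add_zero] at key
  have hgqfq : gq ∣ fq := by
    have : gq ∣ C ((d : ℤ) : ℚ) * fq := by
      refine ⟨Q.map ι, ?_⟩
      have := congrArg (Polynomial.map ι) key
      rw [Polynomial.map_mul, Polynomial.map_mul, Polynomial.map_C] at this
      rw [← this]; rfl
    have hu : IsUnit (C ((d : ℤ) : ℚ)) := isUnit_C.mpr (isUnit_iff_ne_zero.mpr (by exact_mod_cast hdne))
    exact (hu.dvd_mul_left).mp this
  -- Gauss
  have hfc : f.content ≠ 0 := fun h0 => hf (content_eq_zero_iff.mp h0)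
  have hpgfq : (g.primPart).map ι ∣ fq := by
    refine dvd_trans ⟨C ((g.content : ℤ) : ℚ), ?_⟩ hgqfq
    conv_lhs => rw [hgq, g.eq_C_content_mul_primPart]
    rw [Polynomial.map_mul, Polynomial.map_C, mul_comm, eq_intCast]
  have hppdvd : (g.primPart).map ι ∣ (f.primPart).map ι := by
    have hfqeq : fq = C ((f.content : ℤ) : ℚ) * (f.primPart).map ι := by
      conv_lhs => rw [hfq, f.eq_C_content_mul_primPart]
      rw [Polynomial.map_mul, Polynomial.map_C, eq_intCast]
    have hcne : ((f.content : ℤ) : ℚ) ≠ 0 := by exact_mod_cast hfc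
    have : (g.primPart).map ι ∣ C (((f.content : ℤ) : ℚ))⁻¹ * fq := Dvd.dvd.mul_left hpgfq _
    rwa [hfqeq, ← mul_assoc, ← C_mul, inv_mul_cancel₀ hcne, C_1, one_mul] at this
  have hpp : g.primPart ∣ f.primPart :=
    (IsPrimitive.Int.dvd_iff_map_cast_dvd_map_cast _ _ (isPrimitive_primPart g)).mpr hppdvd
  calc g = C g.content * g.primPart := g.eq_C_content_mul_primPart
    _ ∣ C f.content * f.primPart := mul_dvd_mul (map_dvd C hc) hpp
    _ = f := (f.eq_C_content_mul_primPart).symm
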